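/- Under Assumptions 1–3 on the model, let π̄ be the consensus distribution and let m_ij denote the mean first passage time from state i to state j of the Markov chain with transition matrix T. Then for every agent k: π̄_k − 1/n = (1/(2n²)) Σ_{i,j} p_ij α_ij ((1−2ε)π̄_i + π̄_j)(m_ik − m_jk). -/

import Mathlib

open Matrix Filter

noncomputable section

/-- the standard basis vector `e_i`. -/
def eVec {n : ℕ} (i : Fin n) : Fin n → ℝ := fun k => if k = i then 1 else 0

/-- `A_{ij} = I − (e_i−e_j)(e_i−e_j)ᵀ/2` : pairwise averaging matrix. -/
def Amat {n : ℕ} (i j : Fin n) : Matrix (Fin n) (Fin n) ℝ :=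
  1 - (2⁻¹ : ℝ) • Matrix.vecMulVec (eVec i - eVec j) (eVec i - eVec j)

/-- `J_{ij} = I − (1−ε) e_i (e_i−e_j)ᵀ` : influence matrix. -/
def Jmat {n : ℕ} (ε : ℝ) (i j : Fin n) : Matrix (Fin n) (Fin n) ℝ :=
  1 - (1 - ε) • Matrix.vecMulVec (eVec i) (eVec i - eVec j)

/-- the social network matrix `T = (1/n) Σ_{i,j} p_ij [(1−γ_ij) A_ij + γ_ij I]`. -/
def socT {n : ℕ} (p γ : Fin n → Fin n → ℝ) : Matrix (Fin n) (Fin n) ℝ :=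
  ((n : ℝ)⁻¹) • ∑ i, ∑ j, p i j •
    ((1 - γ i j) • Amat i j + γ i j • (1 : Matrix (Fin n) (Fin n) ℝ))

/-- the influence matrix `D = (1/n) Σ_{i,j} p_ij α_ij (J_ij − A_ij)`. -/
def infD {n : ℕ} (p α : Fin n → Fin n → ℝ) (ε : ℝ) : Matrix (Fin n) (Fin n) ℝ :=
  ((n : ℝ)⁻¹) • ∑ i, ∑ j, (p i j * α i j) • (Jmat ε i j - Amat i j)

/-- `isPath E i j L` : there is a directed path of length `L` from `i` to `j`. -/
def isPath {n : ℕ} (E : Fin n → Fin n → Prop) (i j : Fin n) (L : ℕ) : Prop :=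
  ∃ f : ℕ → Fin n, f 0 = i ∧ f L = j ∧ ∀ l < L, E (f l) (f (l + 1))

/-- the fundamental matrix `Y = Σ_{k=0}^∞ (T^k − T^∞)` of a doubly stochastic
Markov chain, whose limit matrix `T^∞` has all entries `1/n`. -/
def fundY {n : ℕ} (T : Matrix (Fin n) (Fin n) ℝ) : Matrix (Fin n) (Fin n) ℝ :=
  Matrix.of fun i j => ∑' k : ℕ, ((T ^ k) i j - 1 / n)

/-- the mean first passage time `m_ij = n (Y_jj − Y_ij)` from state `i` to
state `j` of a doubly stochastic Markov chain with transition matrix `T`. -/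
def mfp {n : ℕ} (T : Matrix (Fin n) (Fin n) ℝ) (i j : Fin n) : ℝ :=
  n * (fundY T j j - fundY T i j)

section helperLemmas
variable {n : ℕ}

lemma Amat_apply (i j a b : Fin n) :
    Amat i j a b = (if a = b then (1:ℝ) else 0) -
      2⁻¹ * (((if a = i then (1:ℝ) else 0) - if a = j then 1 else 0) *
             ((if b = i then (1:ℝ) else 0) - if b = j then 1 else 0)) := by
  simp [Amat, eVec, Matrix.sub_apply, Matrix.smul_apply, Matrix.vecMulVec_apply,
    Matrix.one_apply, Pi.sub_apply]

lemma Amat_nonneg (i j a b : Fin n) : 0 ≤ Amat i j a b := by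
  rw [Amat_apply]
  by_cases h1 : a = b <;> by_cases h2 : a = i <;> by_cases h3 : a = j <;>
    by_cases h4 : b = i <;> by_cases h5 : b = j <;> simp_all <;> norm_num

lemma Amat_row_sum (i j a : Fin n) : ∑ b, Amat i j a b = 1 := by
  simp [Amat_apply, Finset.sum_sub_distrib, ← Finset.mul_sum, Finset.sum_ite_eq,
    Finset.sum_ite_eq']

lemma Amat_symm (i j a b : Fin n) : Amat i j a b = Amat i j b a := by
  have h : (if a = b then (1:ℝ) else 0) = (if b = a then 1 else 0) := by simp [eq_comm]
  rw [Amat_apply, Amat_apply, h]; ring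

lemma Amat_col_sum (i j b : Fin n) : ∑ a, Amat i j a b = 1 := by
  simp_rw [Amat_symm]; exact Amat_row_sum i j b

lemma socT_apply (p γ : Fin n → Fin n → ℝ) (a b : Fin n) :
    socT p γ a b = (n:ℝ)⁻¹ * ∑ i, ∑ j, p i j *
      ((1 - γ i j) * Amat i j a b + γ i j * (if a = b then (1:ℝ) else 0)) := by
  simp only [socT, Matrix.smul_apply, Matrix.sum_apply, Matrix.add_apply,
    Matrix.one_apply, smul_eq_mul]

lemma socT_row_sum (hn : 0 < n) (p γ : Fin n → Fin n → ℝ)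
    (hp_row : ∀ i, ∑ j, p i j = 1) (a : Fin n) : ∑ b, socT p γ a b = 1 := by
  have key : ∀ i j : Fin n, ∑ b, p i j *
      ((1 - γ i j) * Amat i j a b + γ i j * (if a = b then (1:ℝ) else 0)) = p i j := by
    intro i j
    rw [← Finset.mul_sum, Finset.sum_add_distrib, ← Finset.mul_sum, ← Finset.mul_sum,
      Amat_row_sum]
    simp [Finset.sum_ite_eq]
  have swap : ∑ b, socT p γ a b = (n:ℝ)⁻¹ * ∑ i, ∑ j, ∑ b, p i j *
      ((1 - γ i j) * Amat i j a b + γ i j * (if a = b then (1:ℝ) else 0)) := by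
    simp_rw [socT_apply]
    rw [← Finset.mul_sum]
    congr 1
    rw [Finset.sum_comm]
    exact Finset.sum_congr rfl fun i _ => Finset.sum_comm
  rw [swap]
  simp_rw [key, hp_row]
  simp
  field_simp

lemma socT_col_sum (hn : 0 < n) (p γ : Fin n → Fin n → ℝ)
    (hp_row : ∀ i, ∑ j, p i j = 1) (b : Fin n) : ∑ a, socT p γ a b = 1 := by
  have key : ∀ i j : Fin n, ∑ a, p i j *
      ((1 - γ i j) * Amat i j a b + γ i j * (if a = b then (1:ℝ) else 0)) = p i j := by
    intro i j
    rw [← Finset.mul_sum, Finset.sum_add_distrib, ← Finset.mul_sum, ← Finset.mul_sum,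
      Amat_col_sum]
    simp [Finset.sum_ite_eq]
  have swap : ∑ a, socT p γ a b = (n:ℝ)⁻¹ * ∑ i, ∑ j, ∑ a, p i j *
      ((1 - γ i j) * Amat i j a b + γ i j * (if a = b then (1:ℝ) else 0)) := by
    simp_rw [socT_apply]
    rw [← Finset.mul_sum]
    congr 1
    rw [Finset.sum_comm]
    exact Finset.sum_congr rfl fun i _ => Finset.sum_comm
  rw [swap]
  simp_rw [key, hp_row]
  simp
  field_simp

lemma socT_nonneg (p γ : Fin n → Fin n → ℝ) (hp_nonneg : ∀ i j, 0 ≤ p i j)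
    (hγ : ∀ i j, 0 ≤ γ i j) (hγ1 : ∀ i j, γ i j ≤ 1) (a b : Fin n) :
    0 ≤ socT p γ a b := by
  rw [socT_apply]
  refine mul_nonneg (by positivity)
    (Finset.sum_nonneg fun i _ => Finset.sum_nonneg fun j _ => ?_)
  refine mul_nonneg (hp_nonneg i j) (add_nonneg
    (mul_nonneg (by linarith [hγ1 i j]) (Amat_nonneg i j a b))
    (mul_nonneg (hγ i j) (by split_ifs <;> norm_num)))

lemma socT_term_nonneg (p γ : Fin n → Fin n → ℝ) (hp_nonneg : ∀ i j, 0 ≤ p i j)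
    (hγ : ∀ i j, 0 ≤ γ i j) (hγ1 : ∀ i j, γ i j ≤ 1) (i j a b : Fin n) :
    0 ≤ p i j * ((1 - γ i j) * Amat i j a b + γ i j * (if a = b then (1:ℝ) else 0)) :=
  mul_nonneg (hp_nonneg i j) (add_nonneg
    (mul_nonneg (by linarith [hγ1 i j]) (Amat_nonneg i j a b))
    (mul_nonneg (hγ i j) (by split_ifs <;> norm_num)))

lemma socT_diag_pos (p γ : Fin n → Fin n → ℝ) (hp_diag : ∀ i, p i i = 0)
    (hp_nonneg : ∀ i j, 0 ≤ p i j) (hp_row : ∀ i, ∑ j, p i j = 1)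
    (hγ : ∀ i j, 0 ≤ γ i j) (hγ1 : ∀ i j, γ i j ≤ 1) (a : Fin n) :
    0 < socT p γ a a := by
  have hn0 : (0:ℝ) < n := by exact_mod_cast a.pos
  rw [socT_apply]
  obtain ⟨j0, _, hj0⟩ := Finset.exists_ne_zero_of_sum_ne_zero
    (by rw [hp_row a]; norm_num : ∑ j, p a j ≠ 0)
  have hpj0 : 0 < p a j0 := (hp_nonneg a j0).lt_of_ne (Ne.symm hj0)
  have hja : ¬ (a = j0) := fun h => by rw [← h] at hpj0; simp [hp_diag] at hpj0
  refine mul_pos (inv_pos.mpr hn0) (Finset.sum_pos'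
    (fun i _ => Finset.sum_nonneg fun j _ => socT_term_nonneg p γ hp_nonneg hγ hγ1 i j a a)
    ⟨a, Finset.mem_univ a, Finset.sum_pos'
      (fun j _ => socT_term_nonneg p γ hp_nonneg hγ hγ1 a j a a)
      ⟨j0, Finset.mem_univ j0, ?_⟩⟩)
  have hA : Amat a j0 a a = 2⁻¹ := by rw [Amat_apply]; simp [hja]; norm_num
  rw [hA]
  have h1 := hγ a j0; have h2 := hγ1 a j0
  norm_num
  nlinarith

lemma socT_edge_pos (p γ : Fin n → Fin n → ℝ) (hp_nonneg : ∀ i j, 0 ≤ p i j)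
    (hγ : ∀ i j, 0 ≤ γ i j) (hγ1 : ∀ i j, γ i j ≤ 1) {i j : Fin n}
    (hij : i ≠ j) (hpij : 0 < p i j) (hγij : γ i j < 1) : 0 < socT p γ i j := by
  have hn0 : (0:ℝ) < n := by exact_mod_cast i.pos
  rw [socT_apply]
  refine mul_pos (inv_pos.mpr hn0) (Finset.sum_pos'
    (fun a _ => Finset.sum_nonneg fun b _ => socT_term_nonneg p γ hp_nonneg hγ hγ1 a b i j)
    ⟨i, Finset.mem_univ i, Finset.sum_pos'
      (fun b _ => socT_term_nonneg p γ hp_nonneg hγ hγ1 i b i j)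
      ⟨j, Finset.mem_univ j, ?_⟩⟩)
  have hA : Amat i j i j = 2⁻¹ := by
    rw [Amat_apply]; simp [hij, Ne.symm hij]
  rw [hA, if_neg hij]
  nlinarith


section Markov
variable (M : Matrix (Fin n) (Fin n) ℝ)

lemma pow_entry_nonneg (hnn : ∀ a b, 0 ≤ M a b) :
    ∀ (k : ℕ) (a b : Fin n), 0 ≤ (M ^ k) a b := by
  intro k
  induction k with
  | zero =>
    intro a b; rw [pow_zero, Matrix.one_apply]; split_ifs <;> norm_num
  | succ k ih =>
    intro a b; rw [pow_succ, Matrix.mul_apply]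
    exact Finset.sum_nonneg fun c _ => mul_nonneg (ih a c) (hnn c b)

lemma pow_row_sum (hrow : ∀ a, ∑ b, M a b = 1) :
    ∀ (k : ℕ) (a : Fin n), ∑ b, (M ^ k) a b = 1 := by
  intro k
  induction k with
  | zero => intro a; simp [Matrix.one_apply]
  | succ k ih =>
    intro a
    rw [pow_succ]
    simp_rw [Matrix.mul_apply]
    rw [Finset.sum_comm]
    simp_rw [← Finset.mul_sum, hrow, mul_one]
    exact ih a

lemma pow_col_sum (hcol : ∀ b, ∑ a, M a b = 1) :
    ∀ (k : ℕ) (b : Fin n), ∑ a, (M ^ k) a b = 1 := by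
  intro k
  induction k with
  | zero => intro b; simp [Matrix.one_apply]
  | succ k ih =>
    intro b
    rw [pow_succ]
    simp_rw [Matrix.mul_apply]
    rw [Finset.sum_comm]
    simp_rw [← Finset.sum_mul, ih, one_mul]
    exact hcol b

lemma pow_pos_step (hnn : ∀ a b, 0 ≤ M a b) {L : ℕ} {i j : Fin n}
    (h : 0 < (M ^ L) i j) (hdiag : 0 < M j j) : 0 < (M ^ (L + 1)) i j := by
  rw [pow_succ, Matrix.mul_apply]
  exact Finset.sum_pos'
    (fun c _ => mul_nonneg (pow_entry_nonneg M hnn L i c) (hnn c j))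
    ⟨j, Finset.mem_univ j, mul_pos h hdiag⟩

lemma pow_pos_mono (hnn : ∀ a b, 0 ≤ M a b) (hdiag : ∀ a, 0 < M a a)
    {L : ℕ} {i j : Fin n} (h : 0 < (M ^ L) i j) :
    ∀ d, 0 < (M ^ (L + d)) i j := by
  intro d
  induction d with
  | zero => exact h
  | succ d ih => exact pow_pos_step M hnn ih (hdiag j)

lemma pow_pos_of_path (hnn : ∀ a b, 0 ≤ M a b) (E : Fin n → Fin n → Prop)
    (hE : ∀ a b, E a b → 0 < M a b) :
    ∀ (L : ℕ) (i j : Fin n), isPath E i j L → 0 < (M ^ L) i j := by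
  intro L
  induction L with
  | zero =>
    intro i j h
    obtain ⟨f, h0, hL, _⟩ := h
    have : i = j := h0 ▸ hL ▸ rfl
    subst this
    simp [Matrix.one_apply]
  | succ L ih =>
    intro i j h
    obtain ⟨f, h0, hL, hstep⟩ := h
    have h1 : 0 < (M ^ L) i (f L) :=
      ih i (f L) ⟨f, h0, rfl, fun l hl => hstep l (Nat.lt_succ_of_lt hl)⟩
    have h2 : 0 < M (f L) j := hL ▸ hE _ _ (hstep L (Nat.lt_succ_self L))
    rw [pow_succ, Matrix.mul_apply]
    exact Finset.sum_pos'
      (fun c _ => mul_nonneg (pow_entry_nonneg M hnn L i c) (hnn c j))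
      ⟨f L, Finset.mem_univ _, mul_pos h1 h2⟩

lemma exists_pow_all_pos (hnn : ∀ a b, 0 ≤ M a b) (hdiag : ∀ a, 0 < M a a)
    (E : Fin n → Fin n → Prop) (hE : ∀ a b, E a b → 0 < M a b)
    (hconn : ∀ i j : Fin n, ∃ L, isPath E i j L) :
    ∃ m, 1 ≤ m ∧ ∀ i j : Fin n, 0 < (M ^ m) i j := by
  choose L hL using fun ij : Fin n × Fin n => hconn ij.1 ij.2
  refine ⟨(Finset.univ.sup L) + 1, Nat.le_add_left 1 _, fun i j => ?_⟩
  have hLij : L (i, j) ≤ Finset.univ.sup L + 1 :=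
    le_trans (Finset.le_sup (Finset.mem_univ (i, j))) (Nat.le_succ _)
  obtain ⟨d, hd⟩ := Nat.exists_eq_add_of_le hLij
  rw [hd]
  exact pow_pos_mono M hnn hdiag
    (pow_pos_of_path M hnn E hE _ i j (hL (i, j))) d

lemma l1_contract (S : Matrix (Fin n) (Fin n) ℝ) (hnn : ∀ a b, 0 ≤ S a b)
    (hrow : ∀ a, ∑ b, S a b = 1) (w : Fin n → ℝ) :
    ∑ b, |∑ a, w a * S a b| ≤ ∑ a, |w a| := by
  calc ∑ b, |∑ a, w a * S a b| ≤ ∑ b, ∑ a, |w a| * S a b := by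
        refine Finset.sum_le_sum fun b _ => ?_
        refine (Finset.abs_sum_le_sum_abs _ _).trans (Finset.sum_le_sum fun a _ => ?_)
        exact le_of_eq (by rw [abs_mul, abs_of_nonneg (hnn a b)])
    _ = ∑ a, |w a| := by
        rw [Finset.sum_comm]
        simp_rw [← Finset.mul_sum, hrow, mul_one]

lemma l1_contract_delta (S : Matrix (Fin n) (Fin n) ℝ)
    (hrow : ∀ a, ∑ b, S a b = 1) (w : Fin n → ℝ) {δ : ℝ}
    (hδ : ∀ a b, δ ≤ S a b) (hw : ∑ a, w a = 0) :
    ∑ b, |∑ a, w a * S a b| ≤ (1 - n * δ) * ∑ a, |w a| := by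
  have key : ∀ b, ∑ a, w a * S a b = ∑ a, w a * (S a b - δ) := by
    intro b
    simp_rw [mul_sub]
    rw [Finset.sum_sub_distrib, ← Finset.sum_mul, hw]
    ring
  calc ∑ b, |∑ a, w a * S a b| ≤ ∑ b, ∑ a, |w a| * (S a b - δ) := by
        refine Finset.sum_le_sum fun b _ => ?_
        rw [key b]
        refine (Finset.abs_sum_le_sum_abs _ _).trans (Finset.sum_le_sum fun a _ => ?_)
        exact le_of_eq (by rw [abs_mul, abs_of_nonneg (sub_nonneg.mpr (hδ a b))])
    _ = (1 - n * δ) * ∑ a, |w a| := by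
        rw [Finset.sum_comm]
        have h1 : ∀ a : Fin n, ∑ b, |w a| * (S a b - δ) = |w a| * (1 - n * δ) := by
          intro a
          rw [← Finset.mul_sum, Finset.sum_sub_distrib, hrow, Finset.sum_const,
            Finset.card_univ, Fintype.card_fin, nsmul_eq_mul]
        simp_rw [h1]
        rw [← Finset.sum_mul]
        ring

end Markov

section Summ
variable (M : Matrix (Fin n) (Fin n) ℝ)

lemma pow_shift (hcol : ∀ b, ∑ a, M a b = 1) (k l : ℕ) (i b : Fin n) :
    (M ^ (k + l)) i b - 1 / n = ∑ a, ((M ^ k) i a - 1 / n) * (M ^ l) a b := by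
  rw [pow_add, Matrix.mul_apply]
  simp_rw [sub_mul]
  rw [Finset.sum_sub_distrib, ← Finset.mul_sum, pow_col_sum M hcol l b, mul_one]

lemma summable_pow_entry (hnn : ∀ a b, 0 ≤ M a b) (hrow : ∀ a, ∑ b, M a b = 1)
    (hcol : ∀ b, ∑ a, M a b = 1) {m : ℕ} (hm : 1 ≤ m)
    (hpos : ∀ a b, 0 < (M ^ m) a b) (i j : Fin n) :
    Summable (fun k : ℕ => (M ^ k) i j - 1 / n) := by
  have hn0 : 0 < n := i.pos
  have hnR : (0:ℝ) < n := by exact_mod_cast hn0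
  obtain ⟨ab, _, hab⟩ := Finset.exists_min_image Finset.univ
    (fun ab : Fin n × Fin n => (M ^ m) ab.1 ab.2) ⟨(i, j), Finset.mem_univ _⟩
  set δ := (M ^ m) ab.1 ab.2 with hδdef
  have hδpos : 0 < δ := hpos ab.1 ab.2
  have hδle : ∀ a b, δ ≤ (M ^ m) a b := fun a b => hab (a, b) (Finset.mem_univ _)
  set r := 1 - (n : ℝ) * δ with hrdef
  have hr0 : 0 ≤ r := by
    have h2 : (n:ℝ) * δ = ∑ _b : Fin n, δ := by
      rw [Finset.sum_const, Finset.card_univ, Fintype.card_fin, nsmul_eq_mul]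
    have h3 : ∑ _b : Fin n, δ ≤ ∑ b, (M ^ m) ab.1 b :=
      Finset.sum_le_sum fun b _ => hδle ab.1 b
    rw [pow_row_sum M hrow m ab.1] at h3
    rw [hrdef, h2]; linarith
  have hr1 : r < 1 := by
    have : 0 < (n:ℝ) * δ := mul_pos hnR hδpos
    rw [hrdef]; linarith
  set g : ℕ → ℝ := fun k => ∑ b, |(M ^ k) i b - 1 / n| with hg
  have gnonneg : ∀ k, 0 ≤ g k := fun k => Finset.sum_nonneg fun b _ => abs_nonneg _
  have hzero : ∀ k, ∑ a, ((M ^ k) i a - 1 / (n:ℝ)) = 0 := by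
    intro k
    rw [Finset.sum_sub_distrib, pow_row_sum M hrow k i, Finset.sum_const,
      Finset.card_univ, Fintype.card_fin, nsmul_eq_mul]
    field_simp
    norm_num
  have g1 : ∀ k, g (k + 1) ≤ g k := by
    intro k
    calc g (k + 1) = ∑ b, |∑ a, ((M ^ k) i a - 1 / n) * (M ^ 1) a b| := by
          refine Finset.sum_congr rfl fun b _ => ?_
          rw [← pow_shift M hcol k 1 i b]
      _ ≤ ∑ a, |(M ^ k) i a - 1 / n| :=
          l1_contract (M ^ 1) (pow_entry_nonneg M hnn 1) (pow_row_sum M hrow 1) _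
  have g2 : ∀ k, g (k + m) ≤ r * g k := by
    intro k
    calc g (k + m) = ∑ b, |∑ a, ((M ^ k) i a - 1 / n) * (M ^ m) a b| := by
          refine Finset.sum_congr rfl fun b _ => ?_
          rw [← pow_shift M hcol k m i b]
      _ ≤ (1 - n * δ) * ∑ a, |(M ^ k) i a - 1 / n| :=
          l1_contract_delta (M ^ m) (pow_row_sum M hrow m) _ hδle (hzero k)
      _ = r * g k := by rw [hrdef]
  have g3 : ∀ t, g (m * t) ≤ r ^ t * g 0 := by
    intro t
    induction t with
    | zero => simp
    | succ t ih =>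
      have he : m * (t + 1) = m * t + m := by ring
      rw [he]
      calc g (m * t + m) ≤ r * g (m * t) := g2 (m * t)
        _ ≤ r * (r ^ t * g 0) := mul_le_mul_of_nonneg_left ih hr0
        _ = r ^ (t + 1) * g 0 := by ring
  have hanti : Antitone g := antitone_nat_of_succ_le g1
  have gb : ∀ k, g k ≤ r ^ (k / m) * g 0 := fun k =>
    (hanti (Nat.mul_div_le k m)).trans (g3 (k / m))
  have block : ∀ N : ℕ, ∑ k ∈ Finset.range (N * m), r ^ (k / m)
      = (∑ t ∈ Finset.range N, r ^ t) * m := by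
    intro N
    induction N with
    | zero => simp
    | succ N ih =>
      rw [Nat.succ_mul, Finset.sum_range_add, ih, Finset.sum_range_succ]
      have hsm : ∀ s ∈ Finset.range m, r ^ ((N * m + s) / m) = r ^ N := by
        intro s hs
        rw [mul_comm N m, Nat.mul_add_div hm, Nat.div_eq_of_lt (Finset.mem_range.mp hs),
          Nat.add_zero]
      rw [Finset.sum_congr rfl hsm, Finset.sum_const, Finset.card_range, nsmul_eq_mul]
      ring
  have geo : ∀ N : ℕ, ∑ t ∈ Finset.range N, r ^ t ≤ (1 - r)⁻¹ := by
    intro N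
    rw [geom_sum_eq (ne_of_lt hr1)]
    rw [div_le_iff_of_neg (by linarith : r - 1 < 0)]
    have hne : (1:ℝ) - r ≠ 0 := by linarith
    have h4 : (1 - r)⁻¹ * (r - 1) = -1 := by
      rw [show r - 1 = -(1 - r) by ring, mul_neg, inv_mul_cancel₀ hne]
    rw [h4]
    have := pow_nonneg hr0 N
    linarith
  have hbound : ∀ N : ℕ, ∑ k ∈ Finset.range N, g k ≤ (1 - r)⁻¹ * m * g 0 := by
    intro N
    calc ∑ k ∈ Finset.range N, g k ≤ ∑ k ∈ Finset.range N, r ^ (k / m) * g 0 :=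
          Finset.sum_le_sum fun k _ => gb k
      _ ≤ ∑ k ∈ Finset.range (N * m), r ^ (k / m) * g 0 := by
          refine Finset.sum_le_sum_of_subset_of_nonneg ?_
            (fun k _ _ => mul_nonneg (pow_nonneg hr0 _) (gnonneg 0))
          exact Finset.range_subset_range.mpr (Nat.le_mul_of_pos_right N hm)
      _ = (∑ t ∈ Finset.range N, r ^ t) * m * g 0 := by
          rw [← Finset.sum_mul, block]
      _ ≤ (1 - r)⁻¹ * m * g 0 := by
          have hm0 : (0:ℝ) ≤ m := Nat.cast_nonneg m
          have := geo N
          have h5 : (∑ t ∈ Finset.range N, r ^ t) * m ≤ (1 - r)⁻¹ * m :=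
            mul_le_mul_of_nonneg_right this hm0
          exact mul_le_mul_of_nonneg_right h5 (gnonneg 0)
  have hgsum : Summable g := summable_of_sum_range_le gnonneg hbound
  refine Summable.of_norm_bounded hgsum fun k => ?_
  rw [Real.norm_eq_abs]
  exact Finset.single_le_sum (f := fun b => |(M ^ k) i b - 1 / (n:ℝ)|)
    (fun b _ => abs_nonneg _) (Finset.mem_univ j)

end Summ



lemma fundY_apply (M : Matrix (Fin n) (Fin n) ℝ) (i j : Fin n) :
    fundY M i j = ∑' k : ℕ, ((M ^ k) i j - 1 / n) := rfl

lemma fundY_relation (M : Matrix (Fin n) (Fin n) ℝ) (hrow : ∀ a, ∑ b, M a b = 1)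
    (hsum : ∀ a b, Summable fun k : ℕ => (M ^ k) a b - 1 / n) (j k : Fin n) :
    fundY M j k - ∑ c, M j c * fundY M c k = (if j = k then (1:ℝ) else 0) - 1 / n := by
  have h1 : ∑ c, M j c * fundY M c k = ∑' t : ℕ, ∑ c, M j c * ((M ^ t) c k - 1 / n) := by
    simp_rw [fundY_apply, ← tsum_mul_left]
    exact (Summable.tsum_finsetSum fun c _ => (hsum c k).mul_left (M j c)).symm
  have h2 : ∀ t : ℕ, ∑ c, M j c * ((M ^ t) c k - 1 / n) = (M ^ (t + 1)) j k - 1 / n := by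
    intro t
    simp_rw [mul_sub]
    rw [Finset.sum_sub_distrib, ← Finset.sum_mul, hrow j, one_mul, pow_succ',
      Matrix.mul_apply]
  rw [h1]
  simp_rw [h2]
  rw [fundY_apply, Summable.tsum_eq_zero_add (hsum j k), add_sub_cancel_right, pow_zero,
    Matrix.one_apply]

lemma infD_apply (p α : Fin n → Fin n → ℝ) (ε : ℝ) (a b : Fin n) :
    infD p α ε a b = (n:ℝ)⁻¹ * ∑ i, ∑ j, (p i j * α i j) *
      (Jmat ε i j a b - Amat i j a b) := by
  simp [infD, Matrix.sum_apply, Matrix.smul_apply, Matrix.sub_apply, smul_eq_mul]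

lemma JA_apply (ε : ℝ) (i j a b : Fin n) :
    Jmat ε i j a b - Amat i j a b =
      (2⁻¹ * ((if a = i then (1:ℝ) else 0) - if a = j then 1 else 0)
        - (1 - ε) * (if a = i then (1:ℝ) else 0)) *
      ((if b = i then (1:ℝ) else 0) - if b = j then 1 else 0) := by
  rw [Amat_apply]
  simp only [Jmat, Matrix.sub_apply, Matrix.smul_apply, Matrix.vecMulVec_apply,
    Pi.sub_apply, Matrix.one_apply, smul_eq_mul, eVec]
  ring


end helperLemmas

/-- Theorem 7(a): under Assumptions 1–3, for every agent `k`, the excess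
influence is `π̄_k − 1/n = (1/(2n²)) Σ_{i,j} p_ij α_ij ((1−2ε)π̄_i + π̄_j)(m_ik − m_jk)`,
where `m_ij` are the mean first passage times of the chain `T`. -/
theorem stmt_8 {n : ℕ} (hn : 2 ≤ n)
    (p α β γ : Fin n → Fin n → ℝ)
    (hp_diag : ∀ i, p i i = 0) (hp_nonneg : ∀ i j, 0 ≤ p i j) (hp_row : ∀ i, ∑ j, p i j = 1)
    (hconn : ∀ i j : Fin n, ∃ L, isPath (fun a b => 0 < p a b) i j L)
    (hα : ∀ i j, 0 ≤ α i j) (hβ : ∀ i j, 0 ≤ β i j) (hγ : ∀ i j, 0 ≤ γ i j)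
    (habg : ∀ i j, α i j + β i j + γ i j = 1)
    (hint : ∀ i j, 0 < p i j → 0 < β i j + α i j)
    (ε : ℝ) (hε0 : 0 < ε) (hε : ε ≤ 1 / 2)
    -- π̄ : the consensus distribution
    (πbar : Fin n → ℝ) (hπ_nonneg : ∀ i, 0 ≤ πbar i) (hπ_sum : ∑ i, πbar i = 1)
    (hπ_stat : Matrix.vecMul πbar (socT p γ + infD p α ε) = πbar) :
    ∀ k, πbar k - 1 / n =
      (1 / (2 * (n : ℝ) ^ 2)) * ∑ i, ∑ j, p i j * α i j *
        ((1 - 2 * ε) * πbar i + πbar j) * (mfp (socT p γ) i k - mfp (socT p γ) j k) := by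
  intro k
  set T := socT p γ with hT
  have hn0 : 0 < n := lt_of_lt_of_le two_pos hn
  have hnR : (0:ℝ) < n := by exact_mod_cast hn0
  have hnne : (n:ℝ) ≠ 0 := ne_of_gt hnR
  have hγ1 : ∀ i j, γ i j ≤ 1 := fun i j => by
    have h1 := habg i j; have h2 := hα i j; have h3 := hβ i j; linarith
  have hnn : ∀ a b, 0 ≤ T a b := socT_nonneg p γ hp_nonneg hγ hγ1
  have hrowT : ∀ a, ∑ b, T a b = 1 := socT_row_sum hn0 p γ hp_row
  have hcolT : ∀ b, ∑ a, T a b = 1 := socT_col_sum hn0 p γ hp_row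
  have hdiag : ∀ a, 0 < T a a := socT_diag_pos p γ hp_diag hp_nonneg hp_row hγ hγ1
  have hE : ∀ a b : Fin n, 0 < p a b → 0 < T a b := by
    intro a b hpab
    have hab : a ≠ b := fun h => by subst h; simp [hp_diag] at hpab
    have hγab : γ a b < 1 := by
      have h1 := hint a b hpab; have h2 := habg a b; linarith
    exact socT_edge_pos p γ hp_nonneg hγ hγ1 hab hpab hγab
  obtain ⟨m, hm1, hmpos⟩ := exists_pow_all_pos T hnn hdiag _ hE hconn
  have hsum : ∀ a b : Fin n, Summable fun t : ℕ => (T ^ t) a b - 1 / n :=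
    fun a b => summable_pow_entry T hnn hrowT hcolT hm1 hmpos a b
  have hrel := fundY_relation T hrowT hsum
  -- Claim B
  have hD : Matrix.vecMul πbar (infD p α ε) = πbar - Matrix.vecMul πbar T := by
    have h := hπ_stat
    rw [Matrix.vecMul_add] at h
    exact eq_sub_of_add_eq' h
  have claimB : πbar k - 1 / (n:ℝ) =
      ∑ b, Matrix.vecMul πbar (infD p α ε) b * fundY T b k := by
    rw [hD]
    have e1 : ∑ b, (πbar - Matrix.vecMul πbar T) b * fundY T b k
        = ∑ a, πbar a * (fundY T a k - ∑ c, T a c * fundY T c k) := by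
      simp only [Pi.sub_apply, sub_mul, mul_sub, Finset.sum_sub_distrib]
      congr 1
      have hv : ∀ b, Matrix.vecMul πbar T b = ∑ a, πbar a * T a b := fun b => rfl
      simp_rw [hv, Finset.sum_mul, Finset.mul_sum]
      rw [Finset.sum_comm]
      exact Finset.sum_congr rfl fun a _ =>
        Finset.sum_congr rfl fun b _ => mul_assoc _ _ _
    rw [e1]
    simp_rw [hrel]
    simp_rw [mul_sub]
    rw [Finset.sum_sub_distrib, ← Finset.sum_mul, hπ_sum, one_mul]
    congr 1
    simp [mul_ite, Finset.sum_ite_eq']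
  -- Claim C : row of πbar · D
  have hXb : ∀ b : Fin n, Matrix.vecMul πbar (infD p α ε) b
      = (n:ℝ)⁻¹ * ∑ i, ∑ j, (p i j * α i j) *
          (-(2⁻¹) * ((1 - 2*ε) * πbar i + πbar j) *
            ((if b = i then (1:ℝ) else 0) - if b = j then 1 else 0)) := by
    intro b
    have hv : Matrix.vecMul πbar (infD p α ε) b = ∑ a, πbar a * infD p α ε a b := rfl
    rw [hv]
    simp_rw [infD_apply, JA_apply, Finset.mul_sum]
    rw [Finset.sum_comm]
    refine Finset.sum_congr rfl fun i _ => ?_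
    rw [Finset.sum_comm]
    refine Finset.sum_congr rfl fun j _ => ?_
    by_cases hbi : b = i <;> by_cases hbj : b = j <;>
      simp [hbi, hbj, mul_sub, sub_mul, mul_ite, ite_mul, mul_zero, zero_mul, mul_one,
        one_mul, Finset.sum_sub_distrib, Finset.sum_ite_eq', Finset.mem_univ] <;>
      (try split_ifs) <;> (try ring)
  have hmain : ∑ b, Matrix.vecMul πbar (infD p α ε) b * fundY T b k
      = (n:ℝ)⁻¹ * ∑ i, ∑ j, (p i j * α i j) *
          (-(2⁻¹) * ((1 - 2*ε) * πbar i + πbar j) * (fundY T i k - fundY T j k)) := by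
    simp_rw [hXb, Finset.mul_sum, Finset.sum_mul]
    rw [Finset.sum_comm]
    refine Finset.sum_congr rfl fun i _ => ?_
    rw [Finset.sum_comm]
    refine Finset.sum_congr rfl fun j _ => ?_
    simp only [mul_sub, sub_mul, mul_ite, ite_mul, mul_zero, zero_mul, mul_one, one_mul,
      Finset.sum_sub_distrib, Finset.sum_ite_eq', Finset.mem_univ, if_true]
    ring
  rw [claimB, hmain, Finset.mul_sum, Finset.mul_sum]
  refine Finset.sum_congr rfl fun i _ => ?_
  rw [Finset.mul_sum, Finset.mul_sum]
  refine Finset.sum_congr rfl fun j _ => ?_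
  simp only [mfp]
  field_simp
  ring
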